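/- Let (Ω, Σ) be a measurable space and let μ and ν be two nonzero semifinite, decomposable measures on (Ω, Σ) having the same null sets. Let 𝒰 be an ultrafilter on the (common) measure algebra, f : Ω → ℂ measurable and bounded, and a ∈ ℂ. Then lim_𝒰 f = a holds with respect to μ (ε-definition with μ-averages) if and only if lim_𝒰 f = a holds with respect to ν (ε-definition with ν-averages). -/

import Mathlib

open MeasureTheory

/-- An *ultrafilter on the measure algebra* of `(Ω, μ)`: a collection of measurable,
non-null subsets of `Ω`, closed under intersection and under almost-everywhere
enlargement, containing every measurable set or its complement. -/
structure IsMeasureUltrafilter {Ω : Type*} [MeasurableSpace Ω] (μ : Measure Ω)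
    (U : Set (Set Ω)) : Prop where
  measurableSet_of_mem : ∀ F ∈ U, MeasurableSet F
  not_null : ∀ F ∈ U, μ F ≠ 0
  inter_mem : ∀ F ∈ U, ∀ G ∈ U, F ∩ G ∈ U
  mem_of_ae_subset : ∀ F ∈ U, ∀ G : Set Ω, MeasurableSet G → μ (F \ G) = 0 → G ∈ U
  mem_or_compl_mem : ∀ F : Set Ω, MeasurableSet F → F ∈ U ∨ Fᶜ ∈ U

/-- `UltraLim μ U f a` means `lim_U f = a`: for every `ε > 0` there is `F ∈ U` such that
all averages of `f` over measurable subsets of `F` of finite positive measure are within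
`ε` of `a`. -/
def UltraLim {Ω : Type*} [MeasurableSpace Ω] (μ : Measure Ω) (U : Set (Set Ω))
    (f : Ω → ℂ) (a : ℂ) : Prop :=
  ∀ ε : ℝ, 0 < ε → ∃ F ∈ U, ∀ X : Set Ω, X ⊆ F → MeasurableSet X →
    0 < μ X → μ X < ⊤ → ‖(μ X).toReal⁻¹ • ∫ x in X, f x ∂μ - a‖ < ε

/-- A measure is *semifinite* if every measurable set of infinite measure contains a
measurable subset of finite positive measure. -/
def Semifinite {Ω : Type*} [MeasurableSpace Ω] (μ : Measure Ω) : Prop :=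
  ∀ E : Set Ω, MeasurableSet E → μ E = ⊤ →
    ∃ F : Set Ω, F ⊆ E ∧ MeasurableSet F ∧ 0 < μ F ∧ μ F < ⊤

universe u

/-- A measure is *decomposable* if there is a partition of `Ω` into measurable sets of
finite measure which detects measurability and along which `μ` sums. -/
def Decomposable {Ω : Type u} [MeasurableSpace Ω] (μ : Measure Ω) : Prop :=
  ∃ (ι : Type u) (P : ι → Set Ω),
    (∀ i, MeasurableSet (P i)) ∧ (∀ i, μ (P i) < ⊤) ∧
    (Pairwise fun i j => Disjoint (P i) (P j)) ∧
    (⋃ i, P i) = Set.univ ∧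
    (∀ E : Set Ω, (∀ i, MeasurableSet (E ∩ P i)) → MeasurableSet E) ∧
    (∀ E : Set Ω, MeasurableSet E → μ E = ∑' i, μ (E ∩ P i))


lemma avg_dist_le' {Ω : Type*} [MeasurableSpace Ω] (μ : Measure Ω) (f : Ω → ℂ)
    (hf : Measurable f) (X : Set Ω) (hX : MeasurableSet X) (h0 : 0 < μ X) (hfin : μ X < ⊤)
    (c : ℂ) (r : ℝ) (hr : ∀ x ∈ X, ‖f x - c‖ ≤ r) :
    ‖(μ X).toReal⁻¹ • ∫ x in X, f x ∂μ - c‖ ≤ r := by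
  have hT0 : (μ X).toReal ≠ 0 := by
    simp [ENNReal.toReal_eq_zero_iff, h0.ne', hfin.ne]
  haveI : IsFiniteMeasure (μ.restrict X) := ⟨by rwa [Measure.restrict_apply_univ]⟩
  have hg : Measurable fun x => f x - c := hf.sub measurable_const
  have hintf : IntegrableOn f X μ := by
    refine Integrable.mono' (integrable_const (r + ‖c‖)) hf.aestronglyMeasurable ?_
    filter_upwards [ae_restrict_mem hX] with x hx
    calc ‖f x‖ = ‖(f x - c) + c‖ := by ring_nf
      _ ≤ ‖f x - c‖ + ‖c‖ := norm_add_le _ _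
      _ ≤ r + ‖c‖ := by linarith [hr x hx]
  have hnorm : ‖∫ x in X, (f x - c) ∂μ‖ ≤ r * (μ X).toReal :=
    norm_setIntegral_le_of_norm_le_const hfin hr
  have hsplit : ∫ x in X, (f x - c) ∂μ = (∫ x in X, f x ∂μ) - (μ X).toReal • c := by
    rw [integral_sub hintf (integrable_const c), setIntegral_const]; rfl
  have key : (μ X).toReal⁻¹ • ∫ x in X, f x ∂μ - c
      = (μ X).toReal⁻¹ • ∫ x in X, (f x - c) ∂μ := by
    rw [hsplit, smul_sub, smul_smul, inv_mul_cancel₀ hT0, one_smul]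
  rw [key, norm_smul]
  have h2 : ‖((μ X).toReal⁻¹ : ℝ)‖ = (μ X).toReal⁻¹ := by
    rw [Real.norm_eq_abs, abs_of_nonneg (by positivity)]
  rw [h2]
  calc (μ X).toReal⁻¹ * ‖∫ x in X, (f x - c) ∂μ‖
      ≤ (μ X).toReal⁻¹ * (r * (μ X).toReal) :=
        mul_le_mul_of_nonneg_left hnorm (by positivity)
    _ = r := by field_simp

lemma exists_mem_of_subset_iUnion {Ω : Type*} [MeasurableSpace Ω] {μ : Measure Ω}
    {U : Set (Set Ω)} (hU : IsMeasureUltrafilter μ U) {α : Type*} [DecidableEq α]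
    (t : Finset α) (S : α → Set Ω) (hS : ∀ c ∈ t, MeasurableSet (S c))
    {F : Set Ω} (hF : F ∈ U) (hsub : F ⊆ ⋃ c ∈ t, S c) : ∃ c ∈ t, S c ∈ U := by
  induction t using Finset.induction_on generalizing F with
  | empty =>
    have : F ⊆ (∅ : Set Ω) := by simpa using hsub
    exact absurd (measure_mono_null this measure_empty) (hU.not_null F hF)
  | @insert c t hc IH =>
    rcases hU.mem_or_compl_mem (S c) (hS c (Finset.mem_insert_self c t)) with h | h
    · exact ⟨c, Finset.mem_insert_self c t, h⟩
    · have hF' : F ∩ (S c)ᶜ ∈ U := hU.inter_mem F hF _ h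
      have hsub' : F ∩ (S c)ᶜ ⊆ ⋃ b ∈ t, S b := by
        rintro x ⟨hxF, hxc⟩
        rcases Set.mem_iUnion₂.1 (hsub hxF) with ⟨b, hb, hxb⟩
        rcases Finset.mem_insert.1 hb with rfl | hb
        · exact absurd hxb hxc
        · exact Set.mem_iUnion₂.2 ⟨b, hb, hxb⟩
      obtain ⟨b, hb, hbU⟩ := IH (fun b hb => hS b (Finset.mem_insert_of_mem hb)) hF' hsub'
      exact ⟨b, Finset.mem_insert_of_mem hb, hbU⟩

lemma ultraLim_iff_levelSets {Ω : Type*} [MeasurableSpace Ω] (μ : Measure Ω)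
    (hsemi : Semifinite μ) {U : Set (Set Ω)} (hU : IsMeasureUltrafilter μ U)
    (f : Ω → ℂ) (hf : Measurable f) (C : ℝ) (hC : ∀ x, ‖f x‖ ≤ C) (a : ℂ) :
    UltraLim μ U f a ↔ ∀ ε : ℝ, 0 < ε → {x | ‖f x - a‖ ≤ ε} ∈ U := by
  constructor
  · intro h ε hε
    by_contra hne
    have hEm : MeasurableSet {x | ‖f x - a‖ ≤ ε} :=
      measurableSet_le (hf.sub measurable_const).norm measurable_const
    rcases hU.mem_or_compl_mem _ hEm with hE | hG
    · exact hne hE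
    obtain ⟨F, hF, havg⟩ := h (ε/4) (by linarith)
    have hH : F ∩ {x | ‖f x - a‖ ≤ ε}ᶜ ∈ U := hU.inter_mem F hF _ hG
    set H := F ∩ {x | ‖f x - a‖ ≤ ε}ᶜ with hHdef
    have hHm : MeasurableSet H :=
      (hU.measurableSet_of_mem F hF).inter hEm.compl
    obtain ⟨t, ht⟩ := (isCompact_closedBall (0:ℂ) C).elim_finite_subcover
      (fun c : ℂ => Metric.ball c (ε/4)) (fun c => Metric.isOpen_ball)
      (fun z _ => Set.mem_iUnion.2 ⟨z, Metric.mem_ball_self (by linarith)⟩)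
    have hsub : H ⊆ ⋃ c ∈ t, H ∩ f ⁻¹' Metric.ball c (ε/4) := by
      intro x hx
      have hfx : f x ∈ Metric.closedBall (0:ℂ) C := by
        simpa [Metric.mem_closedBall, dist_eq_norm] using hC x
      rcases Set.mem_iUnion₂.1 (ht hfx) with ⟨c, hc, hxc⟩
      exact Set.mem_iUnion₂.2 ⟨c, hc, hx, hxc⟩
    obtain ⟨c, _, hcU⟩ := exists_mem_of_subset_iUnion hU t
      (fun c => H ∩ f ⁻¹' Metric.ball c (ε/4))
      (fun c _ => hHm.inter (hf (Metric.isOpen_ball.measurableSet))) hH hsub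
    set S := H ∩ f ⁻¹' Metric.ball c (ε/4) with hSdef
    have hSm : MeasurableSet S := hHm.inter (hf Metric.isOpen_ball.measurableSet)
    -- some point gives ‖c - a‖ > 3ε/4
    obtain ⟨x0, hx0⟩ := nonempty_of_measure_ne_zero (hU.not_null S hcU)
    have hx0G : ¬ ‖f x0 - a‖ ≤ ε := hx0.1.2
    have hx0c : ‖f x0 - c‖ < ε/4 := by
      have := hx0.2
      simpa [Metric.mem_ball, dist_eq_norm] using this
    have hca : 3*ε/4 < ‖c - a‖ := by
      have h1 : f x0 - a = (f x0 - c) + (c - a) := by ring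
      have h2 : ‖f x0 - a‖ ≤ ‖f x0 - c‖ + ‖c - a‖ := by
        rw [h1]; exact norm_add_le _ _
      push_neg at hx0G
      linarith
    -- pick X of positive finite measure inside S
    obtain ⟨X, hXS, hXm, hX0, hXfin⟩ : ∃ X, X ⊆ S ∧ MeasurableSet X ∧ 0 < μ X ∧ μ X < ⊤ := by
      rcases eq_top_or_lt_top (μ S) with hinf | hfin
      · exact hsemi S hSm hinf
      · exact ⟨S, subset_rfl, hSm, (hU.not_null S hcU).bot_lt, hfin⟩
    have h1 : ‖(μ X).toReal⁻¹ • ∫ x in X, f x ∂μ - a‖ < ε/4 :=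
      havg X (fun x hx => (hXS hx).1.1) hXm hX0 hXfin
    have h2 : ‖(μ X).toReal⁻¹ • ∫ x in X, f x ∂μ - c‖ ≤ ε/4 :=
      avg_dist_le' μ f hf X hXm hX0 hXfin c (ε/4)
        (fun x hx => le_of_lt (by simpa [Metric.mem_ball, dist_eq_norm] using (hXS hx).2))
    have h3 : ‖c - a‖ ≤ ‖(μ X).toReal⁻¹ • ∫ x in X, f x ∂μ - a‖
        + ‖(μ X).toReal⁻¹ • ∫ x in X, f x ∂μ - c‖ := by
      have he : c - a = ((μ X).toReal⁻¹ • ∫ x in X, f x ∂μ - a)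
          - ((μ X).toReal⁻¹ • ∫ x in X, f x ∂μ - c) := by ring
      rw [he]; exact norm_sub_le _ _
    linarith
  · intro h ε hε
    refine ⟨{x | ‖f x - a‖ ≤ ε/2}, h (ε/2) (by linarith), ?_⟩
    intro X hXF hXm h0 hfin
    have := avg_dist_le' μ f hf X hXm h0 hfin a (ε/2) (fun x hx => hXF hx)
    linarith

lemma isMeasureUltrafilter_congr {Ω : Type*} [MeasurableSpace Ω] {μ ν : Measure Ω}
    (hnull : ∀ s : Set Ω, MeasurableSet s → (μ s = 0 ↔ ν s = 0))
    {U : Set (Set Ω)} (hU : IsMeasureUltrafilter μ U) : IsMeasureUltrafilter ν U := by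
  refine ⟨hU.measurableSet_of_mem, ?_, hU.inter_mem, ?_, hU.mem_or_compl_mem⟩
  · intro F hF h
    exact hU.not_null F hF ((hnull F (hU.measurableSet_of_mem F hF)).2 h)
  · intro F hF G hGm h
    exact hU.mem_of_ae_subset F hF G hGm
      ((hnull _ ((hU.measurableSet_of_mem F hF).diff hGm)).2 h)

/-- Corollary II.8. Ultrafilter limits do not change when the measure is
replaced by an equivalent (same null sets) semifinite decomposable measure. -/
theorem ultraLim_congr_of_equiv_measures {Ω : Type u} [MeasurableSpace Ω]
    (μ ν : Measure Ω) (hμ0 : μ ≠ 0) (hν0 : ν ≠ 0)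
    (hμsemi : Semifinite μ) (hνsemi : Semifinite ν)
    (hμdec : Decomposable μ) (hνdec : Decomposable ν)
    (hnull : ∀ s : Set Ω, MeasurableSet s → (μ s = 0 ↔ ν s = 0))
    (U : Set (Set Ω)) (hU : IsMeasureUltrafilter μ U)
    (f : Ω → ℂ) (hf : Measurable f) (C : ℝ) (hC : ∀ x, ‖f x‖ ≤ C) (a : ℂ) :
    UltraLim μ U f a ↔ UltraLim ν U f a := by
  rw [ultraLim_iff_levelSets μ hμsemi hU f hf C hC a,
    ultraLim_iff_levelSets ν hνsemi (isMeasureUltrafilter_congr hnull hU) f hf C hC a]
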